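/- Let H be a complex Hilbert space, m, n ∈ ℕ, and let X = (X_{ps}) ∈ M_m(B(H)) and Y = (Y_{rt}) ∈ M_n(B(H)) be matrices of bounded operators such that the block operator X̃ on the ℓ²-direct sum of m copies of H given by (X̃ξ)_p = Σ_{s=1}^m X_{ps} ξ_s is unitary, and likewise the block operator Ỹ on the ℓ²-direct sum of n copies of H given by (Ỹη)_r = Σ_{t=1}^n Y_{rt} η_t is unitary. Let λ be a positive real number with λ ≠ 1, and let Z = (Z_{pr}) be an m × n matrix with entries in H such that Σ_{l=1}^m X_{pl} Z_{lr} = λ Σ_{t=1}^n Y_{rt} Z_{pt} for all p = 1, …, m and r = 1, …, n. Then Z_{pr} = 0 for all p, r. -/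

import Mathlib

/-- The `ℓ²`-direct sum of finitely many copies of a complete space is complete. -/
instance piLp.completeSpace (p : ENNReal) {ι : Type*} [Fintype ι] (β : ι → Type*)
    [∀ i, UniformSpace (β i)] [∀ i, CompleteSpace (β i)] : CompleteSpace (PiLp p β) :=
  inferInstance

open scoped InnerProductSpace in
lemma isom_of_star_mul_self {E : Type*} [NormedAddCommGroup E] [InnerProductSpace ℂ E]
    [CompleteSpace E] (f : E →L[ℂ] E) (h : star f * f = 1) (x : E) : ‖f x‖ = ‖x‖ := by
  have h1 : ⟪f x, f x⟫_ℂ = ⟪x, x⟫_ℂ := by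
    rw [← ContinuousLinearMap.adjoint_inner_left, ← ContinuousLinearMap.star_eq_adjoint]
    have : (star f * f) x = x := by rw [h]; rfl
    rw [show (star f) (f x) = (star f * f) x from rfl, this]
  have h3 : ‖f x‖ ^ 2 = ‖x‖ ^ 2 := by
    rw [← inner_self_eq_norm_sq (𝕜 := ℂ), ← inner_self_eq_norm_sq (𝕜 := ℂ), h1]
  nlinarith [norm_nonneg (f x), norm_nonneg x]

set_option synthInstance.maxHeartbeats 1000000 in
/-- If the block operators `X̃` and `Ỹ` associated to matrices `X ∈ M_m(B(H))` and
`Y ∈ M_n(B(H))` are unitary, `λ > 0`, `λ ≠ 1`, and the `m × n` matrix `Z` of vectors of `H`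
satisfies `Σ_l X_{pl} Z_{lr} = λ Σ_t Y_{rt} Z_{pt}` for all `p, r`, then `Z = 0`. -/
theorem vanishing_of_intertwiner_matrix_for_distinct_scaling
    {H : Type*} [NormedAddCommGroup H] [InnerProductSpace ℂ H] [CompleteSpace H]
    (m n : ℕ)
    (X : Fin m → Fin m → (H →L[ℂ] H)) (Y : Fin n → Fin n → (H →L[ℂ] H))
    (hX : ∃ Xt : PiLp 2 (fun _ : Fin m => H) →L[ℂ] PiLp 2 (fun _ : Fin m => H),
      (∀ (ξ : PiLp 2 (fun _ : Fin m => H)) (p : Fin m), Xt ξ p = ∑ s, X p s (ξ s)) ∧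
      Xt * star Xt = 1 ∧ star Xt * Xt = 1)
    (hY : ∃ Yt : PiLp 2 (fun _ : Fin n => H) →L[ℂ] PiLp 2 (fun _ : Fin n => H),
      (∀ (η : PiLp 2 (fun _ : Fin n => H)) (r : Fin n), Yt η r = ∑ t, Y r t (η t)) ∧
      Yt * star Yt = 1 ∧ star Yt * Yt = 1)
    (lam : ℝ) (hlam_pos : 0 < lam) (hlam_ne : lam ≠ 1)
    (Z : Fin m → Fin n → H)
    (hZ : ∀ (p : Fin m) (r : Fin n),
      ∑ l, X p l (Z l r) = (lam : ℂ) • ∑ t, Y r t (Z p t)) :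
    ∀ (p : Fin m) (r : Fin n), Z p r = 0 := by
  obtain ⟨Xt, hXt, _, hXu⟩ := hX
  obtain ⟨Yt, hYt, _, hYu⟩ := hY
  set ξ : Fin n → PiLp 2 (fun _ : Fin m => H) := fun r => WithLp.toLp 2 (fun l => Z l r) with hξ
  set η : Fin m → PiLp 2 (fun _ : Fin n => H) := fun p => WithLp.toLp 2 (fun t => Z p t) with hη
  set S : ℝ := ∑ p, ∑ r, ‖Z p r‖ ^ 2 with hS
  have hSnn : ∀ p, ∀ r : Fin n, 0 ≤ ‖Z p r‖ ^ 2 := fun p r => sq_nonneg _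
  have key : S = lam ^ 2 * S := by
    calc S = ∑ r, ∑ l, ‖Z l r‖ ^ 2 := Finset.sum_comm
    _ = ∑ r, ‖ξ r‖ ^ 2 := by
        refine Finset.sum_congr rfl fun r _ => ?_
        rw [PiLp.norm_sq_eq_of_L2]
    _ = ∑ r, ‖Xt (ξ r)‖ ^ 2 := by
        refine Finset.sum_congr rfl fun r _ => ?_
        rw [isom_of_star_mul_self Xt hXu]
    _ = ∑ r, ∑ p, ‖Xt (ξ r) p‖ ^ 2 := by
        refine Finset.sum_congr rfl fun r _ => ?_
        rw [PiLp.norm_sq_eq_of_L2]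
    _ = ∑ r, ∑ p, lam ^ 2 * ‖Yt (η p) r‖ ^ 2 := by
        refine Finset.sum_congr rfl fun r _ => Finset.sum_congr rfl fun p _ => ?_
        have h1 : Xt (ξ r) p = (lam : ℂ) • (Yt (η p) r) := by
          rw [hXt, hYt]
          exact hZ p r
        rw [h1, norm_smul]
        simp [Complex.norm_real, abs_of_pos hlam_pos, mul_pow]
    _ = lam ^ 2 * ∑ p, ∑ r, ‖Yt (η p) r‖ ^ 2 := by
        rw [Finset.sum_comm]; simp [Finset.mul_sum]
    _ = lam ^ 2 * ∑ p, ‖Yt (η p)‖ ^ 2 := by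
        congr 1
        refine Finset.sum_congr rfl fun p _ => ?_
        rw [PiLp.norm_sq_eq_of_L2]
    _ = lam ^ 2 * ∑ p, ‖η p‖ ^ 2 := by
        congr 1
        exact Finset.sum_congr rfl fun p _ => by rw [isom_of_star_mul_self Yt hYu]
    _ = lam ^ 2 * S := by
        congr 1
        exact Finset.sum_congr rfl fun p _ => PiLp.norm_sq_eq_of_L2 _ _
  have hSnonneg : 0 ≤ S := Finset.sum_nonneg fun p _ => Finset.sum_nonneg fun r _ => sq_nonneg _
  have hlam2 : lam ^ 2 ≠ 1 := by
    intro h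
    rcases sq_eq_one_iff.mp h with h1 | h1
    · exact hlam_ne h1
    · linarith
  have hS0 : S = 0 := by
    have hmul : (lam ^ 2 - 1) * S = 0 := by linarith
    rcases mul_eq_zero.mp hmul with h | h
    · exact absurd (by linarith : lam ^ 2 = 1) hlam2
    · exact h
  intro p r
  have hS0' : ∑ p, ∑ r, ‖Z p r‖ ^ 2 = 0 := hS.symm.trans hS0
  have h1 : ∑ r, ‖Z p r‖ ^ 2 = 0 :=
    (Finset.sum_eq_zero_iff_of_nonneg
      (fun p _ => Finset.sum_nonneg fun r _ => sq_nonneg ‖Z p r‖)).mp hS0' p (Finset.mem_univ p)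
  have h2 : ‖Z p r‖ ^ 2 = 0 :=
    (Finset.sum_eq_zero_iff_of_nonneg (fun r _ => sq_nonneg _)).mp h1 r (Finset.mem_univ r)
  simpa using (pow_eq_zero_iff two_ne_zero).mp h2
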